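/- arXiv:1605.03875 — 4 statements merged into one kernel-verified Lean document; each statement's English description precedes it below -/
import Mathlib

section
/- For an n×n real matrix à = [[A, B],[Bᵀ, c]] as above, the elementary symmetric functions satisfy σ_r(Ã) = σ_r(A) + c·σ_{r−1}(A) − Σ_{j=2}^{r} (−1)^j (Bᵀ A^{j−2} B) σ_{r−j}(A) for every 1 ≤ r ≤ n. -/
open Matrix Polynomial

/-- `esigma M r` is the coefficient of `t^r` in `det(I + t M)`,
the `r`-th elementary symmetric function of the eigenvalues of `M`. -/
noncomputable def esigma {κ : Type} [Fintype κ] [DecidableEq κ] (M : Matrix κ κ ℝ) (r : ℕ) : ℝ :=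
  ((1 + (Polynomial.X : Polynomial ℝ) • M.map Polynomial.C).det).coeff r

set_option maxRecDepth 10000

namespace SigmaBlockAux

variable {m : ℕ}

noncomputable def Mp (A : Matrix (Fin m) (Fin m) ℝ) : Matrix (Fin m) (Fin m) (Polynomial ℝ) :=
  1 + (X : Polynomial ℝ) • A.map C

lemma esigma_eq (A : Matrix (Fin m) (Fin m) ℝ) (r : ℕ) :
    esigma A r = ((Mp A).det).coeff r := rfl

lemma coeff_zero_det_Mp (A : Matrix (Fin m) (Fin m) ℝ) : ((Mp A).det).coeff 0 = 1 := by
  rw [coeff_zero_eq_eval_zero, ← Polynomial.coe_evalRingHom, RingHom.map_det]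
  have : (Polynomial.evalRingHom (0:ℝ)).mapMatrix (Mp A) = 1 := by
    ext i j
    simp [Mp, Matrix.one_apply, apply_ite (Polynomial.eval (0:ℝ))]
  rw [this, Matrix.det_one]

lemma det_Mp_ne_zero (A : Matrix (Fin m) (Fin m) ℝ) : (Mp A).det ≠ 0 := fun h => by
  simpa [h] using coeff_zero_det_Mp A

lemma det_fromBlocks_field {K : Type*} [Field K]
    (M : Matrix (Fin m) (Fin m) K) (u v : Fin m → K) (d : K) (hM : M.det ≠ 0) :
    (Matrix.fromBlocks M (Matrix.of fun i (_ : Unit) => u i)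
        (Matrix.of fun (_ : Unit) j => v j) (Matrix.of fun (_ : Unit) (_ : Unit) => d)).det
      = d * M.det - v ⬝ᵥ (M.adjugate *ᵥ u) := by
  haveI := M.invertibleOfIsUnitDet (isUnit_iff_ne_zero.mpr hM)
  rw [Matrix.det_fromBlocks₁₁, Matrix.invOf_eq_nonsing_inv]
  have hadj : M.adjugate = M.det • M⁻¹ := by
    rw [Matrix.inv_def, Ring.inverse_eq_inv, smul_smul, mul_inv_cancel₀ hM, one_smul]
  rw [hadj, Matrix.det_unique (((Matrix.of fun (_:Unit) (_:Unit) => d) -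
      (Matrix.of fun (_ : Unit) j => v j) * M⁻¹ * (Matrix.of fun i (_ : Unit) => u i)))]
  have key : ((Matrix.of fun (_ : Unit) j => v j) * M⁻¹ * (Matrix.of fun i (_ : Unit) => u i))
      (default : Unit) (default : Unit) = v ⬝ᵥ (M⁻¹ *ᵥ u) := by
    simp only [Matrix.mul_apply, Matrix.of_apply, dotProduct, Matrix.mulVec, Finset.sum_mul,
      Finset.mul_sum]
    rw [Finset.sum_comm]
    exact Finset.sum_congr rfl fun i _ => Finset.sum_congr rfl fun j _ => by ring
  simp only [Matrix.sub_apply, Matrix.of_apply, key, Matrix.smul_mulVec,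
    dotProduct_smul, smul_eq_mul]
  ring

lemma key_det (A : Matrix (Fin m) (Fin m) ℝ) (B : Fin m → ℝ) (c : ℝ) :
    (1 + (X : Polynomial ℝ) • (Matrix.fromBlocks A
        (Matrix.of fun i (_ : Unit) => B i)
        (Matrix.of fun (_ : Unit) j => B j)
        (Matrix.of fun (_ : Unit) (_ : Unit) => c)).map C).det
      = (1 + X * C c) * (Mp A).det
        - X ^ 2 * ((fun i => C (B i)) ⬝ᵥ ((Mp A).adjugate *ᵥ fun i => C (B i))) := by
  have h1 : (1 + (X : Polynomial ℝ) • (Matrix.fromBlocks A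
        (Matrix.of fun i (_ : Unit) => B i)
        (Matrix.of fun (_ : Unit) j => B j)
        (Matrix.of fun (_ : Unit) (_ : Unit) => c)).map C)
      = Matrix.fromBlocks (Mp A) (Matrix.of fun i (_ : Unit) => X * C (B i))
          (Matrix.of fun (_ : Unit) j => X * C (B j))
          (Matrix.of fun (_ : Unit) (_ : Unit) => 1 + X * C c) := by
    apply Matrix.ext
    rintro (i | ⟨⟩) (j | ⟨⟩)
    · simp [Mp, Matrix.one_apply, Sum.inl.injEq, Matrix.map_apply]
    · simp [Matrix.one_apply, Matrix.map_apply]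
    · simp [Matrix.one_apply, Matrix.map_apply]
    · simp [Matrix.one_apply, Matrix.map_apply]
  rw [h1]
  apply RatFunc.algebraMap_injective ℝ
  set φ := algebraMap (Polynomial ℝ) (RatFunc ℝ) with hφ
  have hdet : ((φ.mapMatrix (Mp A)).det) = φ (Mp A).det := (RingHom.map_det φ _).symm
  have hMdet : (φ.mapMatrix (Mp A)).det ≠ 0 := by
    rw [hdet]
    intro h
    exact det_Mp_ne_zero A ((map_eq_zero_iff φ (RatFunc.algebraMap_injective ℝ)).mp h)
  rw [RingHom.map_det]
  have h2 : φ.mapMatrix (Matrix.fromBlocks (Mp A) (Matrix.of fun i (_ : Unit) => X * C (B i))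
          (Matrix.of fun (_ : Unit) j => X * C (B j))
          (Matrix.of fun (_ : Unit) (_ : Unit) => 1 + X * C c))
      = Matrix.fromBlocks (φ.mapMatrix (Mp A)) (Matrix.of fun i (_ : Unit) => φ (X * C (B i)))
          (Matrix.of fun (_ : Unit) j => φ (X * C (B j)))
          (Matrix.of fun (_ : Unit) (_ : Unit) => φ (1 + X * C c)) := by
    show Matrix.map _ φ = _
    rw [Matrix.fromBlocks_map]
    rfl
  rw [h2, det_fromBlocks_field _ _ _ _ hMdet]
  have h3 : (fun j => φ (X * C (B j))) ⬝ᵥ ((φ.mapMatrix (Mp A)).adjugate *ᵥ fun i => φ (X * C (B i)))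
      = φ ((fun j => X * C (B j)) ⬝ᵥ ((Mp A).adjugate *ᵥ fun i => X * C (B i))) := by
    rw [← φ.map_adjugate]
    simp [dotProduct, Matrix.mulVec, map_sum, Matrix.map_apply, Finset.mul_sum]
  rw [h3, hdet, ← _root_.map_mul φ, ← _root_.map_sub φ]
  congr 1
  have h4 : (fun j => X * C (B j)) ⬝ᵥ ((Mp A).adjugate *ᵥ fun i => (X : Polynomial ℝ) * C (B i))
      = X ^ 2 * ((fun i => C (B i)) ⬝ᵥ ((Mp A).adjugate *ᵥ fun i => C (B i))) := by
    simp only [dotProduct, Matrix.mulVec, Finset.mul_sum]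
    apply Finset.sum_congr rfl; intro i _
    apply Finset.sum_congr rfl; intro j _
    ring
  rw [h4]

noncomputable def S (A : Matrix (Fin m) (Fin m) ℝ) (k : ℕ) : Matrix (Fin m) (Fin m) ℝ :=
  ∑ l ∈ Finset.range (k + 1), ((-1 : ℝ) ^ l * esigma A (k - l)) • A ^ l

lemma S_succ (A : Matrix (Fin m) (Fin m) ℝ) (k : ℕ) :
    S A (k + 1) = esigma A (k + 1) • (1 : Matrix (Fin m) (Fin m) ℝ) - S A k * A := by
  unfold S
  rw [Finset.sum_range_succ']
  rw [Finset.sum_mul]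
  simp only [pow_zero, one_mul, Nat.sub_zero, pow_succ, Nat.succ_sub_succ, smul_mul_assoc]
  rw [sub_eq_add_neg, add_comm, ← Finset.sum_neg_distrib]
  congr 1
  apply Finset.sum_congr rfl; intro l _
  rw [← neg_smul]
  congr 1
  ring

lemma adj_rec (A : Matrix (Fin m) (Fin m) ℝ) :
    (Mp A).adjugate + (X : Polynomial ℝ) • ((Mp A).adjugate * A.map C) = (Mp A).det • 1 := by
  have h : (Mp A).adjugate * (1 + (X : Polynomial ℝ) • A.map C) = (Mp A).det • 1 :=
    Matrix.adjugate_mul (Mp A)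
  rw [Matrix.mul_add, Matrix.mul_one, Matrix.mul_smul] at h
  exact h

lemma adj_rec_entry (A : Matrix (Fin m) (Fin m) ℝ) (i j : Fin m) :
    (Mp A).adjugate i j + (X : Polynomial ℝ) * ((Mp A).adjugate * A.map C) i j
      = (Mp A).det * (1 : Matrix (Fin m) (Fin m) (Polynomial ℝ)) i j := by
  have h := congrArg (fun M => M i j) (adj_rec A)
  simpa [Matrix.add_apply, Matrix.smul_apply, smul_eq_mul] using h

lemma one_apply_coeff (i j : Fin m) (k : ℕ) :
    ((1 : Matrix (Fin m) (Fin m) (Polynomial ℝ)) i j).coeff k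
      = ((1 : Matrix (Fin m) (Fin m) ℝ) i j) * (1 : Polynomial ℝ).coeff k := by
  by_cases h : i = j <;> simp [Matrix.one_apply, h]

lemma adj_coeff (A : Matrix (Fin m) (Fin m) ℝ) :
    ∀ (k : ℕ) (i j : Fin m), ((Mp A).adjugate i j).coeff k = S A k i j := by
  intro k
  induction k with
  | zero =>
    intro i j
    have h := congrArg (fun p => p.coeff 0) (adj_rec_entry A i j)
    simp only [Polynomial.coeff_add, Polynomial.mul_coeff_zero, Polynomial.coeff_X_zero,
      zero_mul, add_zero, coeff_zero_det_Mp, one_mul] at h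
    rw [h, S]
    by_cases hij : i = j <;>
      simp [Matrix.one_apply, hij, esigma_eq, coeff_zero_det_Mp]
  | succ k ih =>
    intro i j
    have h := congrArg (fun p => p.coeff (k + 1)) (adj_rec_entry A i j)
    simp only [Polynomial.coeff_add, Polynomial.coeff_X_mul] at h
    have hmul : (((Mp A).adjugate * A.map C) i j).coeff k = (S A k * A) i j := by
      rw [Matrix.mul_apply, Polynomial.finset_sum_coeff, Matrix.mul_apply]
      apply Finset.sum_congr rfl; intro l _
      rw [Matrix.map_apply, Polynomial.coeff_mul_C, ih]
    rw [hmul] at h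
    have hrhs : ((Mp A).det * (1 : Matrix (Fin m) (Fin m) (Polynomial ℝ)) i j).coeff (k + 1)
        = esigma A (k + 1) * ((1 : Matrix (Fin m) (Fin m) ℝ) i j) := by
      by_cases hij : i = j <;> simp [Matrix.one_apply, hij, esigma_eq]
    rw [hrhs] at h
    rw [S_succ, Matrix.sub_apply, Matrix.smul_apply, smul_eq_mul]
    linarith

lemma sum_mulVec {ι : Type*} (s : Finset ι) (g : ι → Matrix (Fin m) (Fin m) ℝ) (v : Fin m → ℝ) :
    (∑ l ∈ s, g l) *ᵥ v = ∑ l ∈ s, g l *ᵥ v := by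
  classical
  induction s using Finset.induction with
  | empty => simp [Matrix.zero_mulVec]
  | insert _ _ h ih =>
    rw [Finset.sum_insert h, Finset.sum_insert h, Matrix.add_mulVec, ih]

lemma dot_sum {ι : Type*} (s : Finset ι) (g : ι → (Fin m → ℝ)) (v : Fin m → ℝ) :
    v ⬝ᵥ (∑ l ∈ s, g l) = ∑ l ∈ s, v ⬝ᵥ g l := by
  classical
  induction s using Finset.induction with
  | empty => simp
  | insert _ _ h ih =>
    rw [Finset.sum_insert h, Finset.sum_insert h, dotProduct_add, ih]

lemma q_coeff (A : Matrix (Fin m) (Fin m) ℝ) (B : Fin m → ℝ) (k : ℕ) :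
    ((fun i => C (B i)) ⬝ᵥ ((Mp A).adjugate *ᵥ fun i => C (B i))).coeff k
      = ∑ l ∈ Finset.range (k + 1), (-1 : ℝ) ^ l * esigma A (k - l) * (B ⬝ᵥ (A ^ l *ᵥ B)) := by
  have h1 : ((fun i => C (B i)) ⬝ᵥ ((Mp A).adjugate *ᵥ fun i => C (B i))).coeff k
      = B ⬝ᵥ (S A k *ᵥ B) := by
    simp only [dotProduct, Matrix.mulVec, Polynomial.finset_sum_coeff,
      Polynomial.coeff_C_mul, Polynomial.coeff_mul_C]
    apply Finset.sum_congr rfl; intro i _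
    congr 1
    apply Finset.sum_congr rfl; intro j _
    rw [adj_coeff]
  rw [h1, S, sum_mulVec, dot_sum]
  apply Finset.sum_congr rfl; intro l _
  rw [Matrix.smul_mulVec, dotProduct_smul, smul_eq_mul]

lemma icc_reindex (f : ℕ → ℝ) (s : ℕ) :
    ∑ j ∈ Finset.Icc 2 (s + 2), f j = ∑ l ∈ Finset.range (s + 1), f (l + 2) := by
  induction s with
  | zero => simp
  | succ n ih =>
    rw [show n + 1 + 2 = (n + 2) + 1 from rfl, Finset.sum_Icc_succ_top (by omega), ih,
      Finset.sum_range_succ, Finset.sum_range_succ, Finset.sum_range_succ]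

end SigmaBlockAux

open SigmaBlockAux in
/-- symmetric functions of the block matrix `Ã = [[A, B],[Bᵀ, c]]`:
`σ_r(Ã) = σ_r(A) + c σ_{r−1}(A) − ∑_{j=2}^r (−1)^j (Bᵀ A^{j−2} B) σ_{r−j}(A)` for `1 ≤ r ≤ n`. -/
theorem sigma_block_formula {m : ℕ}
    (A : Matrix (Fin m) (Fin m) ℝ) (B : Fin m → ℝ) (c : ℝ)
    (r : ℕ) (hr1 : 1 ≤ r) (hrn : r ≤ m + 1) :
    esigma (Matrix.fromBlocks A
        (Matrix.of fun i (_ : Unit) => B i)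
        (Matrix.of fun (_ : Unit) j => B j)
        (Matrix.of fun (_ : Unit) (_ : Unit) => c)) r
      = esigma A r + c * esigma A (r - 1)
        - ∑ j ∈ Finset.Icc 2 r, (-1 : ℝ) ^ j * (B ⬝ᵥ (A ^ (j - 2) *ᵥ B)) * esigma A (r - j) := by
  have hkey := key_det A B c
  show ((1 + (X : Polynomial ℝ) • (Matrix.fromBlocks A
        (Matrix.of fun i (_ : Unit) => B i)
        (Matrix.of fun (_ : Unit) j => B j)
        (Matrix.of fun (_ : Unit) (_ : Unit) => c)).map C).det).coeff r = _
  rw [hkey, Polynomial.coeff_sub]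
  obtain ⟨s, rfl⟩ : ∃ s, r = s + 1 := ⟨r - 1, (Nat.succ_pred_eq_of_pos hr1).symm⟩
  have hA : ((1 + X * C c) * (Mp A).det).coeff (s + 1)
      = esigma A (s + 1) + c * esigma A s := by
    rw [add_mul, one_mul, Polynomial.coeff_add, mul_assoc, Polynomial.coeff_X_mul,
      Polynomial.coeff_C_mul, esigma_eq, esigma_eq]
  rw [hA, Nat.add_sub_cancel]
  rcases s with _ | s
  · have h0 : ((X : Polynomial ℝ) ^ 2 *
        ((fun i => C (B i)) ⬝ᵥ ((Mp A).adjugate *ᵥ fun i => C (B i)))).coeff 1 = 0 := by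
      rw [sq, mul_assoc, show (1 : ℕ) = 0 + 1 from rfl, Polynomial.coeff_X_mul,
        Polynomial.mul_coeff_zero, Polynomial.coeff_X_zero, zero_mul]
    rw [h0]
    norm_num
  · have h2 : ((X : Polynomial ℝ) ^ 2 *
        ((fun i => C (B i)) ⬝ᵥ ((Mp A).adjugate *ᵥ fun i => C (B i)))).coeff (s + 1 + 1)
        = ((fun i => C (B i)) ⬝ᵥ ((Mp A).adjugate *ᵥ fun i => C (B i))).coeff s := by
      rw [sq, mul_assoc, Polynomial.coeff_X_mul, Polynomial.coeff_X_mul]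
    rw [show s + 1 + 1 = s + 2 from rfl] at h2 ⊢
    rw [h2, q_coeff, icc_reindex]
    congr 1
    apply Finset.sum_congr rfl; intro l _
    rw [show l + 2 - 2 = l from rfl, show s + 2 - (l + 2) = s - l by omega,
      pow_add, neg_one_sq, mul_one]
    ring
end

section
/- Let A_Σ be an (n−1)×(n−1) real symmetric matrix, ρ, μ ∈ ℝ^q, and set A_α = ρ_α A_Σ + μ_α I for α = 1,…,q. Then for every multi-index u ∈ ℕ^q with |u| ≤ n−1, the coefficient σ̃_u of t^u in det(I + Σ_α t_α A_α) equals (1/(n−1−|u|)!) Σ_{l ≤ u} multinomial(|l|; l) · ρ^l μ^{u−l} · multinomial(n−1−|l|; u−l, n−1−|u|) · σ_{|l|}(A_Σ). -/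
open MvPolynomial Finset

lemma fin2_degree (d : Fin 2 →₀ ℕ) : d.degree = d 0 + d 1 := by
  rw [Finsupp.degree_apply, Finset.sum_subset (Finset.subset_univ _)
    (fun i _ hi => Finsupp.notMem_support_iff.mp hi), Fin.sum_univ_two]

noncomputable def d2 (a b : ℕ) : Fin 2 →₀ ℕ := Finsupp.equivFunOnFinite.symm ![a, b]

lemma d2_apply0 (a b : ℕ) : d2 a b 0 = a := rfl
lemma d2_apply1 (a b : ℕ) : d2 a b 1 = b := rfl
lemma d2_degree (a b : ℕ) : (d2 a b).degree = a + b := by rw [fin2_degree]; rfl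

lemma eq_d2 (d : Fin 2 →₀ ℕ) : d = d2 (d 0) (d 1) := by
  apply Finsupp.ext; intro i; fin_cases i <;> rfl

lemma monomial_d2 (a b : ℕ) (r : ℝ) :
    monomial (d2 a b) r = C r * X 0 ^ a * X 1 ^ b := by
  have hd : d2 a b = 0 + Finsupp.single 0 a + Finsupp.single 1 b := by
    apply Finsupp.ext; intro i
    fin_cases i <;> simp [d2, Finsupp.single_apply]
  rw [X_pow_eq_monomial, X_pow_eq_monomial, C_apply, monomial_mul, monomial_mul,
    mul_one, mul_one, hd]

lemma hom_two {n : ℕ} {P : MvPolynomial (Fin 2) ℝ} (hP : P.IsHomogeneous n) :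
    P = ∑ j ∈ range (n+1),
      monomial (d2 (n-j) j) (coeff (d2 (n-j) j) P) := by
  apply MvPolynomial.ext
  intro d
  rw [coeff_sum]
  simp only [coeff_monomial]
  by_cases hd : d 0 + d 1 = n
  · rw [Finset.sum_eq_single (d 1)]
    · have h1 : d2 (n - d 1) (d 1) = d := by
        conv_rhs => rw [eq_d2 d]
        congr 1
        omega
      rw [if_pos h1, h1]
    · intro j _ hj
      rw [if_neg]
      intro h
      exact hj (by rw [← d2_apply1 (n-j) j, h])
    · intro h
      exact absurd (mem_range.mpr (by omega)) h
  · rw [Finset.sum_eq_zero, eq_comm]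
    · exact (hP.coeff_eq_zero (by rw [fin2_degree]; exact hd)).symm
    · intro j hj
      rw [if_neg]
      intro h
      apply hd
      have := d2_degree (n-j) j
      rw [h, fin2_degree] at this
      have hjn : j ≤ n := by have := mem_range.mp hj; omega
      omega

/-- `msigma A u` is the coefficient of `t^u = ∏ α, t α ^ u α` in the Newton polynomial
`det(I + ∑ α, t α • A α)`. -/
noncomputable def msigma {ι κ : Type} [Fintype ι] [DecidableEq ι] [Fintype κ] [DecidableEq κ]
    (A : ι → Matrix κ κ ℝ) (u : ι → ℕ) : ℝ :=
  MvPolynomial.coeff (Finsupp.equivFunOnFinite.symm u)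
    ((1 + ∑ α, (MvPolynomial.X α : MvPolynomial ι ℝ) • (A α).map MvPolynomial.C).det)

section DetExpand

variable {m : ℕ} (S : Matrix (Fin m) (Fin m) ℝ)

noncomputable def Nmat : Matrix (Fin m) (Fin m) (MvPolynomial (Fin 2) ℝ) :=
  (X 0 : MvPolynomial (Fin 2) ℝ) • 1 + (X 1 : MvPolynomial (Fin 2) ℝ) • S.map C

noncomputable def Pdet : MvPolynomial (Fin 2) ℝ := (Nmat S).det

lemma Nmat_entry (i j : Fin m) :
    Nmat S i j = C ((1 : Matrix (Fin m) (Fin m) ℝ) i j) * X 0 + C (S i j) * X 1 := by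
  by_cases h : i = j <;>
    simp [Nmat, Matrix.add_apply, Matrix.smul_apply, Matrix.one_apply, Matrix.map_apply, h,
      smul_eq_mul, mul_comm]

lemma Pdet_isHomogeneous : (Pdet S).IsHomogeneous m := by
  rw [Pdet, Matrix.det_apply']
  apply IsHomogeneous.sum
  intro σ _
  have h1 : ∀ i : Fin m, (Nmat S (σ i) i).IsHomogeneous 1 := by
    intro i
    rw [Nmat_entry]
    have := ((isHomogeneous_C (Fin 2) ((1 : Matrix (Fin m) (Fin m) ℝ) (σ i) i)).mul
      (isHomogeneous_X ℝ 0)).add ((isHomogeneous_C (Fin 2) (S (σ i) i)).mul (isHomogeneous_X ℝ 1))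
    simpa using this
  have h2 := IsHomogeneous.prod Finset.univ (fun i => Nmat S (σ i) i) (fun _ : Fin m => 1)
    (fun i _ => h1 i)
  simp only [Finset.sum_const, card_univ, Fintype.card_fin, smul_eq_mul, mul_one] at h2
  have h3 : (((Equiv.Perm.sign σ : ℤ) : MvPolynomial (Fin 2) ℝ)) =
      C (((Equiv.Perm.sign σ : ℤ) : ℝ)) := by
    rw [map_intCast]
  rw [h3]
  have := (isHomogeneous_C (Fin 2) (((Equiv.Perm.sign σ : ℤ) : ℝ))).mul h2
  simpa using this

lemma aeval_Pdet (R : Type*) [CommRing R] [Algebra ℝ R] (v w : R) :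
    MvPolynomial.aeval ![v, w] (Pdet S)
      = (v • (1 : Matrix (Fin m) (Fin m) R) + w • S.map (algebraMap ℝ R)).det := by
  rw [Pdet, AlgHom.map_det]
  congr 1
  ext i j
  rw [AlgHom.mapMatrix_apply, Matrix.map_apply, Nmat_entry]
  by_cases h : i = j <;>
    simp [h, Matrix.add_apply, Matrix.smul_apply, Matrix.one_apply, Matrix.map_apply,
      smul_eq_mul, mul_comm]

lemma Pdet_coeff (j : ℕ) (hj : j ≤ m) :
    coeff (d2 (m - j) j) (Pdet S) = esigma S j := by
  have h1 : MvPolynomial.aeval ![(1 : Polynomial ℝ), Polynomial.X] (Pdet S)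
      = (1 + (Polynomial.X : Polynomial ℝ) • S.map Polynomial.C).det := by
    rw [aeval_Pdet, one_smul, Polynomial.algebraMap_eq]
  have h2 : esigma S j = (MvPolynomial.aeval
      ![(1 : Polynomial ℝ), Polynomial.X] (Pdet S)).coeff j := by rw [h1]; rfl
  have key : ∀ j' ∈ range (m + 1),
      (MvPolynomial.aeval ![(1 : Polynomial ℝ), Polynomial.X]
        (monomial (d2 (m - j') j') (coeff (d2 (m - j') j') (Pdet S)))).coeff j
      = if j' = j then coeff (d2 (m - j') j') (Pdet S) else 0 := by
    intro j' _
    rw [monomial_d2, map_mul, map_mul, map_pow, map_pow, aeval_X, aeval_X, aeval_C]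
    simp only [Matrix.cons_val_zero, Matrix.cons_val_one, Matrix.head_cons, one_pow, mul_one,
      one_mul, Polynomial.algebraMap_eq, Polynomial.coeff_C_mul, Polynomial.coeff_X_pow]
    by_cases h : j' = j
    · simp [h]
    · rw [if_neg h, if_neg (fun hc : j = j' => h hc.symm)]
      simp
  rw [h2]
  conv_rhs => rw [hom_two (Pdet_isHomogeneous S), map_sum, Polynomial.finset_sum_coeff,
    Finset.sum_congr rfl key, Finset.sum_ite_eq' (range (m+1)) j
      (fun j' => coeff (d2 (m - j') j') (Pdet S))]
  rw [if_pos (mem_range.mpr (by omega))]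

lemma det_expand (R : Type*) [CommRing R] [Algebra ℝ R] (a b : R) :
    (a • (1 : Matrix (Fin m) (Fin m) R) + b • S.map (algebraMap ℝ R)).det
      = ∑ j ∈ range (m + 1), algebraMap ℝ R (esigma S j) * (a ^ (m - j) * b ^ j) := by
  rw [← aeval_Pdet]
  conv_lhs => rw [hom_two (Pdet_isHomogeneous S)]
  rw [map_sum]
  apply Finset.sum_congr rfl
  intro j hj
  rw [monomial_d2, map_mul, map_mul, map_pow, map_pow, aeval_X, aeval_X, aeval_C,
    Pdet_coeff S j (by have := mem_range.mp hj; omega)]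
  simp only [Matrix.cons_val_zero, Matrix.cons_val_one, Matrix.head_cons]
  ring

end DetExpand

section CoeffLemmas

variable {q : ℕ}

lemma coeff_linear_pow (w : Fin q → ℝ) (j : ℕ) (l : Fin q → ℕ) :
    MvPolynomial.coeff (Finsupp.equivFunOnFinite.symm l)
      ((∑ α, C (w α) * X α : MvPolynomial (Fin q) ℝ) ^ j)
      = if ∑ α, l α = j then (Nat.multinomial Finset.univ l : ℝ) * ∏ α, w α ^ l α else 0 := by
  rw [Finset.sum_pow_eq_sum_piAntidiag, coeff_sum]
  have key : ∀ k ∈ piAntidiag univ j,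
      coeff (Finsupp.equivFunOnFinite.symm l)
        ((Nat.multinomial univ k : MvPolynomial (Fin q) ℝ) * ∏ α, (C (w α) * X α) ^ k α)
      = if k = l then (Nat.multinomial Finset.univ l : ℝ) * ∏ α, w α ^ l α else 0 := by
    intro k hk
    have hprod : (∏ α, (C (w α) * X α) ^ k α : MvPolynomial (Fin q) ℝ)
        = C (∏ α, w α ^ k α) * monomial (Finsupp.equivFunOnFinite.symm k) 1 := by
      have h1 : ∀ α ∈ univ, (C (w α) * X α) ^ k α
          = (C (w α ^ k α) : MvPolynomial (Fin q) ℝ) * X α ^ k α := by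
        intro α _; rw [mul_pow, map_pow]
      rw [Finset.prod_congr rfl h1, Finset.prod_mul_distrib, ← map_prod]
      congr 1
      rw [← prod_X_pow_eq_monomial]
      refine (Finset.prod_subset (Finset.subset_univ _) ?_).symm
      intro α _ hα
      have hk0 : k α = 0 := Finsupp.notMem_support_iff.mp hα
      show (X α : MvPolynomial (Fin q) ℝ) ^ k α = 1
      simp [hk0]
    rw [hprod, ← mul_assoc, ← map_natCast (C : ℝ →+* MvPolynomial (Fin q) ℝ), ← map_mul,
      coeff_C_mul, coeff_monomial]
    by_cases h : k = l
    · subst h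
      simp
    · rw [if_neg (fun hc => h (Finsupp.equivFunOnFinite.symm.injective hc)), if_neg h,
        mul_zero]
  rw [Finset.sum_congr rfl key, Finset.sum_ite_eq' (piAntidiag univ j) l
    (fun _ => (Nat.multinomial Finset.univ l : ℝ) * ∏ α, w α ^ l α)]
  congr 1
  simp [Finset.mem_piAntidiag]

lemma coeff_one_add_linear_pow (w : Fin q → ℝ) (N : ℕ) (v : Fin q → ℕ) (hv : ∑ α, v α ≤ N) :
    MvPolynomial.coeff (Finsupp.equivFunOnFinite.symm v)
      ((1 + ∑ α, C (w α) * X α : MvPolynomial (Fin q) ℝ) ^ N)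
      = (N.choose (∑ α, v α) : ℝ) * (Nat.multinomial Finset.univ v : ℝ) * ∏ α, w α ^ v α := by
  rw [add_comm (1 : MvPolynomial (Fin q) ℝ), add_pow, coeff_sum]
  have key : ∀ k ∈ range (N + 1),
      coeff (Finsupp.equivFunOnFinite.symm v)
        ((∑ α, C (w α) * X α : MvPolynomial (Fin q) ℝ) ^ k * 1 ^ (N - k) * (N.choose k : MvPolynomial (Fin q) ℝ))
      = if k = ∑ α, v α then
          (N.choose (∑ α, v α) : ℝ) * (Nat.multinomial Finset.univ v : ℝ) * ∏ α, w α ^ v α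
        else 0 := by
    intro k _
    rw [one_pow, mul_one, ← map_natCast (C : ℝ →+* MvPolynomial (Fin q) ℝ), mul_comm,
      coeff_C_mul, coeff_linear_pow]
    by_cases h : k = ∑ α, v α
    · rw [if_pos h.symm, if_pos h, h]; ring
    · rw [if_neg (fun hc => h hc.symm), if_neg h, mul_zero]
  rw [Finset.sum_congr rfl key, Finset.sum_ite_eq' (range (N + 1)) (∑ α, v α) _,
    if_pos (mem_range.mpr (by omega))]

end CoeffLemmas

/-- with `A_α = ρ_α A_Σ + μ_α I`, for `|u| ≤ n−1`:
`σ̃_u = (1/(n−1−|u|)!) ∑_{l ≤ u} multinomial(|l|; l) ρ^l μ^{u−l}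
  ((n−1−|l|)!/∏(u−l)!) σ_{|l|}(A_Σ)`. -/
theorem sigma_umbilical_formula {m q : ℕ}
    (S : Matrix (Fin m) (Fin m) ℝ) (hsymm : S.IsSymm)
    (ρ μ : Fin q → ℝ) (u : Fin q → ℕ) (hu : ∑ α, u α ≤ m) :
    msigma (fun α => ρ α • S + μ α • (1 : Matrix (Fin m) (Fin m) ℝ)) u
      = (1 / ((m - ∑ α, u α).factorial : ℝ)) *
        ∑ l ∈ Finset.Iic u,
          (Nat.multinomial Finset.univ l : ℝ) *
          (∏ α, ρ α ^ l α) * (∏ α, μ α ^ (u α - l α)) *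
          (((m - ∑ α, l α).factorial : ℝ) / ∏ α, ((u α - l α).factorial : ℝ)) *
          esigma S (∑ α, l α) := by
  classical
  set s : MvPolynomial (Fin q) ℝ := ∑ α, C (ρ α) * X α with hs
  set c : MvPolynomial (Fin q) ℝ := ∑ α, C (μ α) * X α with hc
  have hmat : (1 + ∑ α, (X α : MvPolynomial (Fin q) ℝ) •
        (ρ α • S + μ α • (1 : Matrix (Fin m) (Fin m) ℝ)).map C)
      = (1 + c) • (1 : Matrix (Fin m) (Fin m) (MvPolynomial (Fin q) ℝ))
        + s • S.map (algebraMap ℝ (MvPolynomial (Fin q) ℝ)) := by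
    apply Matrix.ext; intro i j
    simp only [Matrix.add_apply, Matrix.sum_apply, Matrix.smul_apply, Matrix.map_apply,
      Matrix.one_apply, smul_eq_mul, MvPolynomial.algebraMap_eq, map_add, map_mul, map_one,
      eq_self_iff_true, if_true, mul_one, mul_zero, map_zero]
    by_cases h : i = j
    · subst h
      simp only [eq_self_iff_true, if_true, mul_one]
      rw [hs, hc, add_assoc, Finset.sum_mul, ← Finset.sum_add_distrib]
      congr 1
      apply Finset.sum_congr rfl
      intro α _
      rw [map_one]
      ring
    · simp only [if_neg h, mul_zero, add_zero, zero_add, mul_one]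
      rw [hs, Finset.sum_mul]
      apply Finset.sum_congr rfl
      intro α _
      rw [map_zero]
      ring
  have hdet := det_expand S (MvPolynomial (Fin q) ℝ) (1 + c) s
  have step1 : msigma (fun α => ρ α • S + μ α • (1 : Matrix (Fin m) (Fin m) ℝ)) u
      = ∑ p ∈ Finset.HasAntidiagonal.antidiagonal (Finsupp.equivFunOnFinite.symm u),
          ∑ j ∈ range (m + 1), esigma S j *
            (coeff p.1 ((1 + c) ^ (m - j)) * coeff p.2 (s ^ j)) := by
    simp only [msigma]
    rw [hmat, hdet, coeff_sum]
    rw [Finset.sum_congr rfl (fun j _ => by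
      rw [MvPolynomial.algebraMap_eq, coeff_C_mul, MvPolynomial.coeff_mul, Finset.mul_sum]),
      Finset.sum_comm]
  have main : ∀ l ∈ Finset.Iic u,
      (∑ j ∈ range (m + 1), esigma S j *
        (coeff (Finsupp.equivFunOnFinite.symm (fun α => u α - l α)) ((1 + c) ^ (m - j)) *
          coeff (Finsupp.equivFunOnFinite.symm l) (s ^ j)))
      = (1 / ((m - ∑ α, u α).factorial : ℝ)) *
        ((Nat.multinomial Finset.univ l : ℝ) *
          (∏ α, ρ α ^ l α) * (∏ α, μ α ^ (u α - l α)) *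
          (((m - ∑ α, l α).factorial : ℝ) / ∏ α, ((u α - l α).factorial : ℝ)) *
          esigma S (∑ α, l α)) := by
    intro l hl
    have hle : ∀ α, l α ≤ u α := fun α => (Finset.mem_Iic.mp hl) α
    set k := ∑ α, l α with hk
    set K := ∑ α, (u α - l α) with hKdef
    have hK : K + k = ∑ α, u α := by
      rw [hKdef, hk, ← Finset.sum_add_distrib]
      exact Finset.sum_congr rfl (fun α _ => Nat.sub_add_cancel (hle α))
    have hkm : k ≤ m := by omega
    rw [Finset.sum_eq_single k]
    · rw [hs, coeff_linear_pow, if_pos rfl,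
        coeff_one_add_linear_pow μ (m - k) (fun α => u α - l α) (by show ∑ α, (u α - l α) ≤ m - k; omega)]
      have h1 : (∏ α, (u α - l α).factorial) * Nat.multinomial univ (fun α => u α - l α)
          = K.factorial := Nat.multinomial_spec _ _
      have h2 : (m - k).choose K * K.factorial * (m - k - K).factorial = (m - k).factorial :=
        Nat.choose_mul_factorial_mul_factorial (by omega)
      have h3 : m - k - K = m - ∑ α, u α := by omega
      have hnat : (m - k).choose K * Nat.multinomial univ (fun α => u α - l α) *
          ((m - ∑ α, u α).factorial * ∏ α, (u α - l α).factorial) = (m - k).factorial := by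
        rw [← h3]
        calc (m - k).choose K * Nat.multinomial univ (fun α => u α - l α) *
              ((m - k - K).factorial * ∏ α, (u α - l α).factorial)
            = (m - k).choose K *
              ((∏ α, (u α - l α).factorial) * Nat.multinomial univ (fun α => u α - l α)) *
              (m - k - K).factorial := by ring
          _ = (m - k).choose K * K.factorial * (m - k - K).factorial := by rw [h1]
          _ = (m - k).factorial := h2
      have hfac : ((m - k).choose K : ℝ) * (Nat.multinomial univ (fun α => u α - l α) : ℝ) *
          (((m - ∑ α, u α).factorial : ℝ) * ∏ α, ((u α - l α).factorial : ℝ))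
          = ((m - k).factorial : ℝ) := by exact_mod_cast hnat
      have hne1 : ((m - ∑ α, u α).factorial : ℝ) ≠ 0 :=
        Nat.cast_ne_zero.mpr (Nat.factorial_ne_zero _)
      have hne2 : (∏ α, ((u α - l α).factorial : ℝ)) ≠ 0 :=
        Finset.prod_ne_zero_iff.mpr (fun α _ => Nat.cast_ne_zero.mpr (Nat.factorial_ne_zero _))
      field_simp
      linear_combination (esigma S k * (∏ α, μ α ^ (u α - l α)) *
        (Nat.multinomial univ l : ℝ) * (∏ α, ρ α ^ l α)) * hfac
    · intro j _ hne
      rw [hs, coeff_linear_pow, if_neg (fun hc => hne hc.symm), mul_zero, mul_zero]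
    · intro hnk
      exact absurd (mem_range.mpr (by omega)) hnk
  have happ : ∀ p ∈ Finset.HasAntidiagonal.antidiagonal (Finsupp.equivFunOnFinite.symm u),
      ∀ α, p.1 α + p.2 α = u α := by
    intro p hp α
    have h := DFunLike.congr_fun (Finset.HasAntidiagonal.mem_antidiagonal.mp hp) α
    simpa using h
  rw [step1, Finset.mul_sum]
  refine Finset.sum_nbij' (fun p => (p.2 : Fin q → ℕ))
    (fun l => (Finsupp.equivFunOnFinite.symm (fun α => u α - l α),
      Finsupp.equivFunOnFinite.symm l)) ?_ ?_ ?_ ?_ ?_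
  · intro p hp
    refine Finset.mem_Iic.mpr (fun α => ?_)
    have := happ p hp α
    show p.2 α ≤ u α
    omega
  · intro l hl
    have hle : ∀ α, l α ≤ u α := fun α => (Finset.mem_Iic.mp hl) α
    refine Finset.HasAntidiagonal.mem_antidiagonal.mpr ?_
    apply Finsupp.ext
    intro α
    simp only [Finsupp.add_apply, Finsupp.coe_equivFunOnFinite_symm]
    exact Nat.sub_add_cancel (hle α)
  · intro p hp
    beta_reduce
    have h2 : Finsupp.equivFunOnFinite.symm (p.2 : Fin q → ℕ) = p.2 :=
      Finsupp.equivFunOnFinite.symm_apply_apply p.2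
    have h1 : Finsupp.equivFunOnFinite.symm (fun α => u α - (p.2 : Fin q → ℕ) α) = p.1 := by
      apply Finsupp.ext
      intro α
      have := happ p hp α
      simp only [Finsupp.coe_equivFunOnFinite_symm]
      omega
    rw [h1, h2]
  · intro l _
    rfl
  · intro p hp
    beta_reduce
    have h2 : Finsupp.equivFunOnFinite.symm (p.2 : Fin q → ℕ) = p.2 :=
      Finsupp.equivFunOnFinite.symm_apply_apply p.2
    have h1 : Finsupp.equivFunOnFinite.symm (fun α => u α - (p.2 : Fin q → ℕ) α) = p.1 := by
      apply Finsupp.ext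
      intro α
      have := happ p hp α
      simp only [Finsupp.coe_equivFunOnFinite_symm]
      omega
    have hmem2 : (p.2 : Fin q → ℕ) ∈ Finset.Iic u := by
      refine Finset.mem_Iic.mpr (fun α => ?_)
      have := happ p hp α
      show p.2 α ≤ u α
      omega
    have := main (p.2 : Fin q → ℕ) hmem2
    rw [h1, h2] at this
    exact this
end

section
/- Let A_Σ be an (n−1)×(n−1) symmetric matrix, ρ, μ ∈ ℝ^q, Ã_α = ρ_α A_Σ + μ_α I, and Ā = (A_Σ, μ₁I, …, μ_qI). Then for every multi-index u ∈ ℕ^q with |u| ≤ n−1: σ_u(Ã₁,…,Ã_q) = Σ_{l ≤ u} multinomial(|l|; l) · ρ^l · σ̄_{(|l|, u−l)}, where σ̄_{(j,v)} is the coefficient of s^j t^v in det(I + sA_Σ + Σ_α t_α μ_α I). -/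
section Aux
open MvPolynomial Finset


lemma mon_eq {q : ℕ} (w : Fin q → ℕ) (c : ℝ) :
    C c * ∏ α, (X α : MvPolynomial (Fin q) ℝ) ^ w α
      = monomial (Finsupp.equivFunOnFinite.symm w) c := by
  rw [monomial_eq]
  congr 1
  rw [Finsupp.prod_fintype]
  · simp
  · intro i; simp

lemma key {q : ℕ} (ρ : Fin q → ℝ) (u : Fin q → ℕ) (P : MvPolynomial (Unit ⊕ Fin q) ℝ) :
    MvPolynomial.coeff (Finsupp.equivFunOnFinite.symm u)
      (aeval (Sum.elim (fun _ : Unit => ∑ α, C (ρ α) * X α) (fun α => X α)) P)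
    = ∑ l ∈ Finset.Iic u, (Nat.multinomial Finset.univ l : ℝ) * (∏ α, ρ α ^ l α) *
        MvPolynomial.coeff
          (Finsupp.equivFunOnFinite.symm (Sum.elim (fun _ : Unit => ∑ α, l α) (u - l))) P := by
  induction P using MvPolynomial.induction_on' with
  | add p q hp hq =>
    rw [map_add, coeff_add, hp, hq, ← Finset.sum_add_distrib]
    refine Finset.sum_congr rfl fun l _ => ?_
    rw [coeff_add, mul_add]
  | monomial d a =>
    set j : ℕ := d (Sum.inl ()) with hj
    set v : Fin q → ℕ := fun α => d (Sum.inr α) with hv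
    have step1 : aeval (Sum.elim (fun _ : Unit => ∑ α, C (ρ α) * X α) (fun α => X α))
        (monomial d a)
        = ∑ k ∈ piAntidiag (univ : Finset (Fin q)) j,
            monomial (Finsupp.equivFunOnFinite.symm (k + v))
              ((Nat.multinomial univ k : ℝ) * (∏ α, ρ α ^ k α) * a) := by
      rw [aeval_monomial, Finsupp.prod_fintype _ _ (fun i => pow_zero _)]
      rw [Fintype.prod_sum_type]
      simp only [Sum.elim_inl, Sum.elim_inr]
      rw [Fintype.prod_unique]
      rw [Finset.sum_pow_eq_sum_piAntidiag]
      rw [Finset.sum_mul, Finset.mul_sum]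
      refine Finset.sum_congr rfl fun k hk => ?_
      have hsplit : ∏ α, (C (ρ α) * X α : MvPolynomial (Fin q) ℝ) ^ k α
          = C (∏ α, ρ α ^ k α) * ∏ α, (X α : MvPolynomial (Fin q) ℝ) ^ k α := by
        rw [map_prod, ← Finset.prod_mul_distrib]
        simp [mul_pow]
      rw [hsplit, ← mon_eq, map_mul, map_mul, algebraMap_eq]
      have hcast : ((Nat.multinomial univ k : ℕ) : MvPolynomial (Fin q) ℝ)
          = C ((Nat.multinomial univ k : ℕ) : ℝ) := by
        rw [C_eq_coe_nat]
      rw [hcast]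
      have hprodsplit : ∏ α, (X α : MvPolynomial (Fin q) ℝ) ^ (k + v) α
          = (∏ α, (X α : MvPolynomial (Fin q) ℝ) ^ k α) *
            ∏ α, (X α : MvPolynomial (Fin q) ℝ) ^ v α := by
        rw [← Finset.prod_mul_distrib]
        simp [pow_add]
      rw [hprodsplit]
      ring
    rw [step1, coeff_sum]
    simp only [coeff_monomial, EmbeddingLike.apply_eq_iff_eq]
    have hcond : ∀ l : Fin q → ℕ,
        (d = Finsupp.equivFunOnFinite.symm (Sum.elim (fun _ : Unit => ∑ α, l α) (u - l)))
        ↔ (j = ∑ α, l α ∧ ∀ α, v α = u α - l α) := by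
      intro l
      rw [Equiv.eq_symm_apply]
      constructor
      · intro h
        constructor
        · exact congrFun h (Sum.inl ())
        · intro α; exact congrFun h (Sum.inr α)
      · intro ⟨h1, h2⟩
        funext i
        cases i with
        | inl x => exact h1
        | inr α => exact h2 α
    by_cases hc : v ≤ u ∧ (∑ α, (u α - v α)) = j
    · rw [Finset.sum_eq_single_of_mem (u - v), Finset.sum_eq_single_of_mem (u - v)]
      · have : d = Finsupp.equivFunOnFinite.symm
            (Sum.elim (fun _ : Unit => ∑ α, (u - v) α) (u - (u - v))) := by
          rw [hcond]
          refine ⟨hc.2.symm, fun α => ?_⟩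
          have h1 : v α ≤ u α := hc.1 α
          simp only [Pi.sub_apply]
          omega
        have huv : u - v + v = u := by
          funext α
          have h1 : v α ≤ u α := hc.1 α
          simp only [Pi.add_apply, Pi.sub_apply]
          omega
        rw [if_pos huv, if_pos this]
      · exact Finset.mem_Iic.mpr (fun α => Nat.sub_le _ _)
      · intro l hl hne
        rw [if_neg, mul_zero]
        intro h
        apply hne
        have h2 := (hcond l).mp h
        have hl' := Finset.mem_Iic.mp hl
        funext α
        have e1 : v α = u α - l α := h2.2 α
        have e2 : l α ≤ u α := hl' α
        simp only [Pi.sub_apply]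
        omega
      · simp only [mem_piAntidiag]
        exact ⟨hc.2, fun i _ => Finset.mem_univ i⟩
      · intro k hk hne
        rw [if_neg]
        intro h
        apply hne
        funext α
        have := congrFun h α
        simp only [Pi.add_apply, Pi.sub_apply] at this ⊢
        omega
    · rw [Finset.sum_eq_zero, Finset.sum_eq_zero]
      · intro l hl
        rw [if_neg, mul_zero]
        intro h
        apply hc
        have h2 := (hcond l).mp h
        have hl' := Finset.mem_Iic.mp hl
        constructor
        · intro α
          have e1 : v α = u α - l α := h2.2 α
          exact le_trans (le_of_eq e1) (Nat.sub_le _ _)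
        · rw [h2.1]
          apply Finset.sum_congr rfl
          intro α _
          have e1 : v α = u α - l α := h2.2 α
          have e2 : l α ≤ u α := hl' α
          omega
      · intro k hk
        rw [if_neg]
        intro h
        apply hc
        simp only [mem_piAntidiag] at hk
        constructor
        · intro α
          have e1 : k α + v α = u α := congrFun h α
          exact e1 ▸ Nat.le_add_left (v α) (k α)
        · rw [← hk.1]
          apply Finset.sum_congr rfl
          intro α _
          have e1 : k α + v α = u α := congrFun h α
          omega


noncomputable def subst {q : ℕ} (ρ : Fin q → ℝ) :
    MvPolynomial (Unit ⊕ Fin q) ℝ →ₐ[ℝ] MvPolynomial (Fin q) ℝ :=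
  aeval (Sum.elim (fun _ : Unit => ∑ α, C (ρ α) * X α) (fun α => X α))

lemma matrix_map {m q : ℕ} (S : Matrix (Fin m) (Fin m) ℝ) (ρ μ : Fin q → ℝ) :
    (1 + ∑ i : Unit ⊕ Fin q, (X i : MvPolynomial (Unit ⊕ Fin q) ℝ) •
        ((Sum.elim (fun _ : Unit => S) (fun α : Fin q => μ α • (1 : Matrix (Fin m) (Fin m) ℝ))) i).map C).map
      (subst ρ)
    = 1 + ∑ α : Fin q, (X α : MvPolynomial (Fin q) ℝ) •
        ((ρ α • S + μ α • (1 : Matrix (Fin m) (Fin m) ℝ)).map C) := by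
  ext i j
  by_cases h : i = j <;>
    simp [h, subst, Matrix.map_apply, Matrix.add_apply, Matrix.sum_apply, Matrix.smul_apply,
      Matrix.one_apply, Fintype.sum_sum_type, Finset.mul_sum, Finset.sum_mul,
      Finset.sum_add_distrib, mul_comm, mul_left_comm, add_mul, mul_add]
end Aux

/-- with `Ã_α = ρ_α A_Σ + μ_α I` and `Ā = (A_Σ, μ₁ I, …, μ_q I)`,
`σ_u(Ã) = ∑_{l ≤ u} multinomial(|l|; l) ρ^l σ̄_{(|l|, u−l)}` for `|u| ≤ n−1`. -/
theorem sigma_umbilical_via_bar {m q : ℕ}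
    (S : Matrix (Fin m) (Fin m) ℝ) (hsymm : S.IsSymm)
    (ρ μ : Fin q → ℝ) (u : Fin q → ℕ) (hu : ∑ α, u α ≤ m) :
    msigma (fun α => ρ α • S + μ α • (1 : Matrix (Fin m) (Fin m) ℝ)) u
      = ∑ l ∈ Finset.Iic u,
          (Nat.multinomial Finset.univ l : ℝ) * (∏ α, ρ α ^ l α) *
          msigma
            (Sum.elim (fun _ : Unit => S)
              (fun α : Fin q => μ α • (1 : Matrix (Fin m) (Fin m) ℝ)))
            (Sum.elim (fun _ : Unit => ∑ α, l α) (u - l)) := by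
  unfold msigma
  have hdet : ((1 : Matrix (Fin m) (Fin m) (MvPolynomial (Fin q) ℝ))
        + ∑ α, (MvPolynomial.X α : MvPolynomial (Fin q) ℝ) •
          ((ρ α • S + μ α • (1 : Matrix (Fin m) (Fin m) ℝ)).map MvPolynomial.C)).det
      = MvPolynomial.aeval
          (Sum.elim (fun _ : Unit => ∑ α, MvPolynomial.C (ρ α) * MvPolynomial.X α)
            (fun α => MvPolynomial.X α))
          ((1 + ∑ i : Unit ⊕ Fin q, (MvPolynomial.X i : MvPolynomial (Unit ⊕ Fin q) ℝ) •
            ((Sum.elim (fun _ : Unit => S)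
              (fun α : Fin q => μ α • (1 : Matrix (Fin m) (Fin m) ℝ))) i).map
              MvPolynomial.C).det) := by
    rw [show (MvPolynomial.aeval
          (Sum.elim (fun _ : Unit => ∑ α, MvPolynomial.C (ρ α) * MvPolynomial.X α)
            (fun α => MvPolynomial.X α)) : MvPolynomial (Unit ⊕ Fin q) ℝ →ₐ[ℝ] _)
        = subst ρ from rfl]
    rw [AlgHom.map_det, AlgHom.mapMatrix_apply, matrix_map S ρ μ]
  rw [hdet, key]
end

section
/- Let n ≥ 2 and q ≥ 1. Let each n×n symmetric matrix A_α (α = 1,…,q) have the block form A_α = [[D_α, B_α],[B_αᵀ, c_α]] where D_α = ρ_α D + μ_α I_{n−1} with D diagonal, B_α ∈ ℝ^{n−1}, c_α ∈ ℝ. Let ν = e_n be the last basis vector. Then for every multi-index u ∈ ℕ^q, ⟨T_u ν, ν⟩ = σ̃_u, where T_u = T_u(A₁,…,A_q) is the generalized Newton transformation of the tuple (A₁,…,A_q) and σ̃_u is the coefficient of t^u in det(I_{n−1} + Σ_α t_α D_α). -/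
open Matrix

/-- Determinant of a diagonal matrix bordered by one symmetric row/column, over a field. -/
lemma det_diag_border {κ : Type} [Fintype κ] [DecidableEq κ] {F : Type} [Field F]
    (δ : κ → F) (hδ : ∀ i, δ i ≠ 0) (b : κ → F) (e : F) :
    (Matrix.fromBlocks (Matrix.diagonal δ) (Matrix.of fun i (_ : Unit) => b i)
      (Matrix.of fun (_ : Unit) j => b j) (Matrix.of fun (_:Unit) (_:Unit) => e)).det
    = e * ∏ i, δ i - ∑ i, b i * b i * ∏ j ∈ Finset.univ.erase i, δ j := by
  haveI : Invertible δ :=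
    ⟨fun i => (δ i)⁻¹, funext fun i => inv_mul_cancel₀ (hδ i), funext fun i => mul_inv_cancel₀ (hδ i)⟩
  haveI : Invertible (Matrix.diagonal δ) := Matrix.diagonalInvertible δ
  rw [Matrix.det_fromBlocks₁₁, Matrix.det_diagonal, Matrix.det_unique]
  have hinv : ⅟ (Matrix.diagonal δ) = Matrix.diagonal fun i => (δ i)⁻¹ := by
    rw [Matrix.invOf_diagonal_eq]
    exact congrArg Matrix.diagonal (invOf_eq_right_inv (a := δ) (funext fun i => mul_inv_cancel₀ (hδ i)))
  simp only [Matrix.sub_apply, Matrix.mul_apply, hinv, Matrix.diagonal_apply, Matrix.of_apply,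
    Fintype.sum_unique]
  rw [mul_sub, Finset.mul_sum]
  congr 1
  · ring
  · refine Finset.sum_congr rfl fun i _ => ?_
    rw [← Finset.mul_prod_erase _ _ (Finset.mem_univ i)]
    simp only [mul_ite, ite_mul, mul_zero, zero_mul, Finset.sum_ite_eq', Finset.sum_ite_eq, Finset.mem_univ, if_true]
    field_simp
    linear_combination (∏ x ∈ Finset.univ.erase i, δ x) * b i ^ 2 * mul_inv_cancel₀ (hδ i)

/-- The bordered-diagonal determinant formula over a multivariate polynomial ring. -/
lemma det_diag_border_poly {κ σ : Type} [Fintype κ] [DecidableEq κ] [Fintype σ] [DecidableEq σ]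
    (δ b : κ → MvPolynomial σ ℝ) (e : MvPolynomial σ ℝ) (hδ : ∀ i, δ i ≠ 0) :
    (Matrix.fromBlocks (Matrix.diagonal δ) (Matrix.of fun i (_ : Unit) => b i)
      (Matrix.of fun (_ : Unit) j => b j) (Matrix.of fun (_:Unit) (_:Unit) => e)).det
    = e * ∏ i, δ i - ∑ i, b i * b i * ∏ j ∈ Finset.univ.erase i, δ j := by
  set K := FractionRing (MvPolynomial σ ℝ)
  set f : MvPolynomial σ ℝ →+* K := algebraMap (MvPolynomial σ ℝ) K with hf
  have hinj : Function.Injective f := IsFractionRing.injective _ _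
  apply hinj
  rw [RingHom.map_det]
  have hmap : ((Matrix.fromBlocks (Matrix.diagonal δ) (Matrix.of fun i (_ : Unit) => b i)
      (Matrix.of fun (_ : Unit) j => b j) (Matrix.of fun (_:Unit) (_:Unit) => e)).map f)
      = Matrix.fromBlocks (Matrix.diagonal (fun i => f (δ i)))
        (Matrix.of fun i (_ : Unit) => f (b i)) (Matrix.of fun (_ : Unit) j => f (b j))
        (Matrix.of fun (_:Unit) (_:Unit) => f e) := by
    rw [Matrix.fromBlocks_map, Matrix.diagonal_map (map_zero f)]
    rfl
  rw [show f.mapMatrix (Matrix.fromBlocks (Matrix.diagonal δ) (Matrix.of fun i (_ : Unit) => b i)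
      (Matrix.of fun (_ : Unit) j => b j) (Matrix.of fun (_:Unit) (_:Unit) => e)) = _ from hmap, det_diag_border (fun i => f (δ i)) (fun i h => hδ i (hinj (by simpa using h)))]
  simp [map_sub, _root_.map_mul, map_prod, map_sum]

/-- A finite sum of matrices applied to a vector. -/
lemma sum_mulVec' {n : Type} [Fintype n] {κ : Type} (s : Finset κ)
    (M : κ → Matrix n n ℝ) (v : n → ℝ) :
    (∑ a ∈ s, M a) *ᵥ v = ∑ a ∈ s, M a *ᵥ v := by
  classical
  induction s using Finset.cons_induction with
  | empty => simp [Matrix.zero_mulVec]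
  | cons a s ha ih => rw [Finset.sum_cons, Finset.sum_cons, Matrix.add_mulVec, ih]

/-- for symmetric block matrices `A_α = [[ρ_α D + μ_α I, B_α],[B_αᵀ, c_α]]`
with `D` diagonal and `ν` the last basis vector,
`⟨T_u ν, ν⟩ = σ̃_u`, where `σ̃_u` is the coefficient of `t^u` in `det(I_{n−1} + ∑ t_α D_α)`. -/
theorem gnt_boundary_formula {q m : ℕ} (hm : 1 ≤ m)
    (d : Fin m → ℝ) (ρ μ : Fin q → ℝ) (B : Fin q → Fin m → ℝ) (c : Fin q → ℝ)
    (A : Fin q → Matrix (Fin m ⊕ Unit) (Fin m ⊕ Unit) ℝ)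
    (hA : ∀ α, A α = Matrix.fromBlocks
        (ρ α • Matrix.diagonal d + μ α • (1 : Matrix (Fin m) (Fin m) ℝ))
        (Matrix.of fun i (_ : Unit) => B α i)
        (Matrix.of fun (_ : Unit) j => B α j)
        (Matrix.of fun (_ : Unit) (_ : Unit) => c α))
    (T : (Fin q → ℕ) → Matrix (Fin m ⊕ Unit) (Fin m ⊕ Unit) ℝ)
    (hT0 : T 0 = 1)
    (hTrec : ∀ u : Fin q → ℕ, u ≠ 0 →
      T u = msigma A u • (1 : Matrix (Fin m ⊕ Unit) (Fin m ⊕ Unit) ℝ)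
        - ∑ α, if u α = 0 then 0 else A α * T (Function.update u α (u α - 1)))
    (u : Fin q → ℕ) :
    (T u *ᵥ Pi.single (Sum.inr ()) 1) ⬝ᵥ Pi.single (Sum.inr ()) 1
      = msigma (fun α => ρ α • Matrix.diagonal d + μ α • (1 : Matrix (Fin m) (Fin m) ℝ)) u := by
  classical
  open MvPolynomial in
  set R := MvPolynomial (Fin q) ℝ with hR
  let δ : Fin m → R := fun i => 1 + ∑ α, X α * C (ρ α * d i + μ α)
  let β : Fin m → R := fun i => ∑ α, X α * C (B α i)
  let γ : R := ∑ α, X α * C (c α)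
  let P : R := ∏ i, δ i
  let Qp : Fin m → R := fun i => -(β i * ∏ j ∈ Finset.univ.erase i, δ j)
  have hδne : ∀ i, δ i ≠ 0 := by
    intro i h
    have := congrArg MvPolynomial.constantCoeff h
    simp [δ] at this
  -- the diagonal-block Newton polynomial matrix
  have hdiag : (1 + ∑ α, (X α : R) • (ρ α • Matrix.diagonal d + μ α • (1 : Matrix (Fin m) (Fin m) ℝ)).map C)
      = Matrix.diagonal δ := by
    refine Matrix.ext fun i j => ?_
    by_cases hij : i = j
    · subst hij
      simp only [Matrix.add_apply, Matrix.one_apply_eq, Matrix.sum_apply, Matrix.smul_apply,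
        Matrix.map_apply, Matrix.diagonal_apply_eq, smul_eq_mul, δ]
      congr 1
      refine Finset.sum_congr rfl fun α _ => ?_
      simp [Matrix.add_apply, Matrix.smul_apply, Matrix.diagonal_apply_eq, Matrix.one_apply_eq]
    · simp [Matrix.diagonal_apply_ne _ hij, Matrix.one_apply_ne hij, Matrix.map_apply,
        Matrix.sum_apply, hij]
  -- the full Newton polynomial matrix is a bordered diagonal matrix
  have hblocks : (1 + ∑ α, (X α : R) • (A α).map C)
      = Matrix.fromBlocks (Matrix.diagonal δ) (Matrix.of fun i (_ : Unit) => β i)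
        (Matrix.of fun (_ : Unit) j => β j) (Matrix.of fun (_:Unit) (_:Unit) => 1 + γ) := by
    refine Matrix.ext fun x y => ?_
    have hAB : ∀ α, (A α).map (C : ℝ →+* R) = Matrix.fromBlocks
        ((ρ α • Matrix.diagonal d + μ α • (1 : Matrix (Fin m) (Fin m) ℝ)).map C)
        (Matrix.of fun i (_ : Unit) => C (B α i))
        (Matrix.of fun (_ : Unit) j => C (B α j))
        (Matrix.of fun (_ : Unit) (_ : Unit) => C (c α)) := by
      intro α
      rw [hA α, Matrix.fromBlocks_map]
      rfl
    cases x with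
    | inl i => cases y with
      | inl j =>
        have := congrFun (congrFun hdiag i) j
        simp only [Matrix.add_apply, Matrix.sum_apply, Matrix.smul_apply, hAB,
          Matrix.fromBlocks_apply₁₁, Matrix.one_apply, Sum.inl.injEq] at this ⊢
        convert this using 2
      | inr t =>
        simp [hAB, Matrix.sum_apply, Matrix.one_apply, β, mul_comm]
    | inr s => cases y with
      | inl j =>
        simp [hAB, Matrix.sum_apply, Matrix.one_apply, β, mul_comm]
      | inr t =>
        simp [hAB, Matrix.sum_apply, Matrix.one_apply, γ, mul_comm, add_comm]
  -- the diagonal Newton polynomial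
  have hPco : ∀ w : Fin q → ℕ,
      msigma (fun α => ρ α • Matrix.diagonal d + μ α • (1 : Matrix (Fin m) (Fin m) ℝ)) w
      = MvPolynomial.coeff (Finsupp.equivFunOnFinite.symm w) P := by
    intro w
    unfold msigma
    rw [hdiag, Matrix.det_diagonal]
  -- the full Newton polynomial
  have hFP : ∀ w : Fin q → ℕ, msigma A w
      = MvPolynomial.coeff (Finsupp.equivFunOnFinite.symm w) ((1 + γ) * P + ∑ i, β i * Qp i) := by
    intro w
    unfold msigma
    rw [hblocks, det_diag_border_poly δ β (1 + γ) hδne]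
    congr 1
    rw [sub_eq_add_neg, ← Finset.sum_neg_distrib]
    congr 1
    refine Finset.sum_congr rfl fun i _ => ?_
    simp only [Qp]
    ring
  have hQδ : ∀ i, δ i * Qp i = -(β i * P) := by
    intro i
    simp only [Qp, P, mul_neg, neg_inj]
    rw [← Finset.mul_prod_erase _ δ (Finset.mem_univ i)]
    ring
  have hcoeff : ∀ (g : R) (w : Fin q → ℕ) (α : Fin q),
      MvPolynomial.coeff (Finsupp.equivFunOnFinite.symm w) (X α * g)
      = if w α = 0 then 0
        else MvPolynomial.coeff (Finsupp.equivFunOnFinite.symm (Function.update w α (w α - 1))) g := by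
    intro g w α
    rw [MvPolynomial.coeff_X_mul']
    by_cases h : w α = 0
    · rw [if_pos h, if_neg]
      simp [Finsupp.mem_support_iff, h]
    · rw [if_neg h, if_pos]
      · congr 1
        ext b
        by_cases hb : b = α
        · subst hb
          simp [Finsupp.single_apply]
        · simp [Finsupp.single_apply, Ne.symm hb, Function.update_apply, hb]
      · simp [Finsupp.mem_support_iff, h]
  set cf : (Fin q → ℕ) → R → ℝ := fun w g => MvPolynomial.coeff (Finsupp.equivFunOnFinite.symm w) g with hcf
  set upd : (Fin q → ℕ) → Fin q → (Fin q → ℕ) := fun w α => Function.update w α (w α - 1) with hupd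
  -- coefficient recursion for Qp
  have hQrec : ∀ (w : Fin q → ℕ) (i : Fin m), cf w (Qp i)
      = -∑ α, (if w α = 0 then 0 else
          B α i * cf (upd w α) P + (ρ α * d i + μ α) * cf (upd w α) (Qp i)) := by
    intro w i
    have e1 : ∑ α, X α * (C (B α i) * P) = β i * P := by
      simp only [β]
      rw [Finset.sum_mul]
      simp only [mul_assoc]
    have e2 : ∑ α, X α * (C (ρ α * d i + μ α) * Qp i)
        = (∑ α, X α * C (ρ α * d i + μ α)) * Qp i := by
      rw [Finset.sum_mul]
      simp only [mul_assoc]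
    have h1 : Qp i = -(∑ α, X α * (C (B α i) * P + C (ρ α * d i + μ α) * Qp i)) := by
      have h2 := hQδ i
      simp only [δ] at h2
      simp only [mul_add, Finset.sum_add_distrib, e1, e2, neg_add]
      linear_combination h2
    calc cf w (Qp i) = cf w (-(∑ α, X α * (C (B α i) * P + C (ρ α * d i + μ α) * Qp i))) := by
          rw [← h1]
      _ = -∑ α, cf w (X α * (C (B α i) * P + C (ρ α * d i + μ α) * Qp i)) := by
          simp only [cf]
          rw [MvPolynomial.coeff_neg, MvPolynomial.coeff_sum]
      _ = -∑ α, (if w α = 0 then 0 else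
          B α i * cf (upd w α) P + (ρ α * d i + μ α) * cf (upd w α) (Qp i)) := by
          congr 1
          refine Finset.sum_congr rfl fun α _ => ?_
          rw [hcf]
          simp only
          rw [hcoeff]
          split_ifs with h
          all_goals first
          | rfl
          | rw [MvPolynomial.coeff_add, MvPolynomial.coeff_C_mul, MvPolynomial.coeff_C_mul]
  -- coefficient recursion for P
  have hPrec : ∀ w : Fin q → ℕ, cf w P = msigma A w - ∑ α, (if w α = 0 then 0 else
      (c α * cf (upd w α) P + ∑ i, B α i * cf (upd w α) (Qp i))) := by
    intro w
    have e3 : ∑ α, X α * (C (c α) * P) = γ * P := by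
      simp only [γ]
      rw [Finset.sum_mul]
      simp only [mul_assoc]
    have e4 : ∑ i, β i * Qp i = ∑ α, X α * ∑ i, C (B α i) * Qp i := by
      simp only [β]
      rw [Finset.sum_congr rfl fun x _ => Finset.sum_mul Finset.univ _ (Qp x)]
      simp only [mul_assoc]
      rw [Finset.sum_comm]
      simp only [Finset.mul_sum]
    have hid : P = ((1 + γ) * P + ∑ i, β i * Qp i)
        - ∑ α, X α * (C (c α) * P + ∑ i, C (B α i) * Qp i) := by
      have e5 : ∑ α, X α * (C (c α) * P + ∑ i, C (B α i) * Qp i)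
          = γ * P + ∑ i, β i * Qp i := by
        simp only [mul_add, Finset.sum_add_distrib, e3, ← e4]
      rw [e5]
      ring
    have hco := congrArg (MvPolynomial.coeff (Finsupp.equivFunOnFinite.symm w)) hid
    rw [MvPolynomial.coeff_sub, MvPolynomial.coeff_sum] at hco
    rw [hcf]
    simp only
    rw [hco, ← hFP w]
    congr 1
    refine Finset.sum_congr rfl fun α _ => ?_
    rw [hcoeff]
    split_ifs with h
    all_goals first
    | rfl
    | · rw [MvPolynomial.coeff_add, MvPolynomial.coeff_C_mul, MvPolynomial.coeff_sum]
        congr 1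
        exact Finset.sum_congr rfl fun i _ => by rw [MvPolynomial.coeff_C_mul]
  simp only [hupd] at hQrec hPrec
  -- evaluation of A α on split vectors
  have hAl : ∀ (α : Fin q) (f : Fin m → ℝ) (g : Unit → ℝ) (i : Fin m),
      (A α *ᵥ Sum.elim f g) (Sum.inl i) = (ρ α * d i + μ α) * f i + B α i * g () := by
    intro α f g i
    rw [hA α, Matrix.fromBlocks_mulVec]
    simp only [Sum.elim_inl, Pi.add_apply, Matrix.add_mulVec, Matrix.smul_mulVec,
      Matrix.one_mulVec, Pi.smul_apply, Matrix.mulVec_diagonal, smul_eq_mul,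
      Matrix.mulVec, dotProduct, Matrix.of_apply, Fintype.sum_unique,
      Function.comp, Sum.elim_inl, Sum.elim_inr, Matrix.diagonal_apply, ite_mul, zero_mul,
      Finset.sum_ite_eq, Finset.mem_univ, if_true]
    ring
  have hAr : ∀ (α : Fin q) (f : Fin m → ℝ) (g : Unit → ℝ),
      (A α *ᵥ Sum.elim f g) (Sum.inr ()) = (∑ i, B α i * f i) + c α * g () := by
    intro α f g
    rw [hA α, Matrix.fromBlocks_mulVec]
    simp [Matrix.mulVec, dotProduct, Fintype.sum_unique, Function.comp]
  have hite : ∀ (p : Prop) [Decidable p] (v : (Fin m ⊕ Unit) → ℝ) (x : Fin m ⊕ Unit),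
      (if p then (0 : (Fin m ⊕ Unit) → ℝ) else v) x = if p then 0 else v x := by
    intro p _ v x
    split_ifs <;> rfl
  -- the key induction
  have key : ∀ (N : ℕ) (w : Fin q → ℕ), (∑ α, w α) ≤ N →
      T w *ᵥ (Pi.single (Sum.inr ()) 1 : (Fin m ⊕ Unit) → ℝ)
      = Sum.elim (fun i => cf w (Qp i)) (fun _ => cf w P) := by
    intro N
    induction N with
    | zero =>
      intro w hw
      have hw0 : w = 0 := by
        funext a
        exact (Finset.sum_eq_zero_iff.mp (Nat.le_zero.mp hw)) a (Finset.mem_univ a)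
      subst hw0
      rw [hT0, Matrix.one_mulVec]
      have h0 : (Finsupp.equivFunOnFinite.symm (0 : Fin q → ℕ)) = (0 : Fin q →₀ ℕ) := by
        ext a
        simp
      funext x
      cases x with
      | inl i =>
        have hq0 : cf 0 (Qp i) = 0 := by
          rw [hcf]
          simp only [h0]
          rw [← MvPolynomial.constantCoeff_eq]
          simp [Qp, β]
        rw [Sum.elim_inl, hq0]
        simp
      | inr t =>
        have hp1 : cf 0 P = 1 := by
          rw [hcf]
          simp only [h0]
          rw [← MvPolynomial.constantCoeff_eq]
          simp [P, δ]
        cases t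
        rw [Sum.elim_inr, hp1]
        simp
    | succ N ih =>
      intro w hw
      by_cases h0 : w = 0
      · subst h0
        exact ih 0 (by simp)
      · have hstep : ∀ α, ¬ (w α = 0) → (∑ α', Function.update w α (w α - 1) α') ≤ N := by
          intro α hα
          rw [Finset.sum_update_of_mem (Finset.mem_univ α)]
          have h2 := Finset.add_sum_erase Finset.univ w (Finset.mem_univ α)
          rw [Finset.erase_eq] at h2
          omega
        have hmv : T w *ᵥ (Pi.single (Sum.inr ()) 1 : (Fin m ⊕ Unit) → ℝ)
            = msigma A w • (Pi.single (Sum.inr ()) 1 : (Fin m ⊕ Unit) → ℝ)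
              - ∑ α, (if w α = 0 then 0 else A α * T (Function.update w α (w α - 1)))
                  *ᵥ (Pi.single (Sum.inr ()) 1 : (Fin m ⊕ Unit) → ℝ) := by
          rw [hTrec w h0, Matrix.sub_mulVec, Matrix.smul_mulVec, Matrix.one_mulVec,
            sum_mulVec']
        have hterm : ∀ α, (if w α = 0 then 0 else A α * T (Function.update w α (w α - 1)))
              *ᵥ (Pi.single (Sum.inr ()) 1 : (Fin m ⊕ Unit) → ℝ)
            = if w α = 0 then 0 else
                A α *ᵥ Sum.elim (fun i => cf (Function.update w α (w α - 1)) (Qp i))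
                  (fun _ => cf (Function.update w α (w α - 1)) P) := by
          intro α
          split_ifs with hα
          · rw [Matrix.zero_mulVec]
          · rw [← Matrix.mulVec_mulVec, ih _ (hstep α hα)]
        rw [hmv]
        funext x
        simp only [Pi.sub_apply, Pi.smul_apply, Finset.sum_apply, smul_eq_mul, hterm, hite]
        cases x with
        | inl i =>
          rw [Sum.elim_inl, hQrec w i]
          rw [Pi.single_eq_of_ne (by simp)]
          rw [mul_zero, zero_sub, neg_inj]
          refine Finset.sum_congr rfl fun α _ => ?_
          split_ifs with hα
          · rfl
          · rw [hAl]
            ring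
        | inr t =>
          cases t
          rw [Sum.elim_inr, hPrec w]
          rw [Pi.single_eq_same, mul_one]
          congr 1
          refine Finset.sum_congr rfl fun α _ => ?_
          split_ifs with hα
          · rfl
          · rw [hAr]
            ring
  rw [dotProduct_single, mul_one, key (∑ α, u α) u le_rfl, Sum.elim_inr, hPco u]
end
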